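/- Under (A0), (B1), (B2), if f is a pointwise limit of a subsequence of f_n(x) = ℙ_x(τ_ϑ > n)/ℙ_e(τ_ϑ > n), then f is superharmonic for (X(t)) and satisfies 𝔼_x[ f(H_1) ; 𝒯_ϑ > 1 ] ≤ f(x) − 1 for all x ∈ E, where (H_n) is the ladder height chain with kernel P_H and 𝒯_ϑ its absorption time. Consequently, the renewal function V(x) = 𝔼_x(𝒯_ϑ) is finite on E and V(x) ≤ liminf_n f_n(x) for all x ∈ E. -/

import Mathlib

open scoped ENNReal Classical BigOperators
open Filter

noncomputable section

namespace RW

variable {G : Type*}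

/-- One-step transition operator `Pφ(x) = Σ_y p(x,y) φ(y)`. -/
def kapp (p : G → G → ℝ≥0∞) (φ : G → ℝ≥0∞) (x : G) : ℝ≥0∞ := ∑' y, p x y * φ y

/-- n-step transition kernel. -/
def kiter (p : G → G → ℝ≥0∞) : ℕ → G → G → ℝ≥0∞
  | 0 => fun x y => if x = y then 1 else 0
  | n + 1 => fun x y => ∑' z, p x z * kiter p n z y

/-- Green function `G(x,y) = Σ_t ℙ_x(X(t)=y)`. -/
def green (p : G → G → ℝ≥0∞) (x y : G) : ℝ≥0∞ := ∑' n, kiter p n x y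

/-- Green operator `Gφ(x) = Σ_y G(x,y) φ(y)`. -/
def greenApp (p : G → G → ℝ≥0∞) (φ : G → ℝ≥0∞) (x : G) : ℝ≥0∞ := ∑' y, green p x y * φ y

/-- Probability of first hitting `y` at time `n ≥ 1`. -/
def fhit (p : G → G → ℝ≥0∞) : ℕ → G → G → ℝ≥0∞
  | 0 => fun _ _ => 0
  | 1 => p
  | n + 2 => fun x y => ∑' z, if z = y then 0 else p x z * fhit p (n + 1) z y

/-- Hitting probability `Q(x,y) = ℙ_x(∃ t ≥ 1, X(t) = y)`. -/
def hitProb (p : G → G → ℝ≥0∞) (x y : G) : ℝ≥0∞ := ∑' n, fhit p n x y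

/-- Survival probability `ℙ_x(τ_ϑ > n)`. -/
def surv (p : G → G → ℝ≥0∞) (n : ℕ) (x : G) : ℝ≥0∞ := ∑' y, kiter p n x y

/-- Expected lifetime `𝔼_x(τ_ϑ) = Σ_n ℙ_x(τ_ϑ > n)`. -/
def gexp (p : G → G → ℝ≥0∞) (x : G) : ℝ≥0∞ := ∑' n, surv p n x

variable [Group G]

/-- Matrix coefficients `a_u(x,y)` of the operator `A_u = T_u P - P T_u`. -/
def acoef (p : G → G → ℝ≥0∞) (E : Set G) (u x y : G) : ℝ≥0∞ :=
  if y * u⁻¹ ∈ E then p (x * u) y - p x (y * u⁻¹) else p (x * u) y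

/-- The operator `A_u φ(x) = Σ_y a_u(x,y) φ(y)`. -/
def Aop (p : G → G → ℝ≥0∞) (E : Set G) (u : G) (φ : G → ℝ≥0∞) (x : G) : ℝ≥0∞ :=
  ∑' y, acoef p E u x y * φ y

/-- Ladder height transition kernel `p_H(x,y) = G A_x 𝟙_{y}(e)`. -/
def ladder (p : G → G → ℝ≥0∞) (E : Set G) (x y : G) : ℝ≥0∞ :=
  ∑' z, green p 1 z * acoef p E x z y

/-- The renewal function `V(x) = 𝔼_x(𝒯_ϑ)` of the ladder height process. -/
def V (p : G → G → ℝ≥0∞) (E : Set G) (x : G) : ℝ≥0∞ :=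
  ∑' n, surv (ladder p E) n x

end RW

end

namespace RW
variable {G : Type*}

/-- Iterated application of the one-step operator. -/
noncomputable def papp (p : G → G → ℝ≥0∞) : ℕ → (G → ℝ≥0∞) → G → ℝ≥0∞
  | 0 => fun ψ => ψ
  | n + 1 => fun ψ => kapp p (papp p n ψ)

lemma papp_eq (p : G → G → ℝ≥0∞) (n : ℕ) (ψ : G → ℝ≥0∞) (x : G) :
    papp p n ψ x = ∑' z, kiter p n x z * ψ z := by
  induction n generalizing x with
  | zero =>
    simp only [papp, kiter]
    rw [tsum_eq_single x]
    · simp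
    · intro z hz
      simp [Ne.symm hz]
  | succ n ih =>
    show kapp p (papp p n ψ) x = _
    unfold kapp
    calc ∑' w, p x w * papp p n ψ w
        = ∑' w, ∑' z, p x w * (kiter p n w z * ψ z) := by
          refine tsum_congr fun w => ?_
          rw [ih w, ← ENNReal.tsum_mul_left]
      _ = ∑' z, (∑' w, p x w * kiter p n w z) * ψ z := by
          rw [ENNReal.tsum_comm]
          refine tsum_congr fun z => ?_
          rw [← ENNReal.tsum_mul_right]
          exact tsum_congr fun w => (mul_assoc _ _ _).symm
      _ = _ := by simp only [kiter]

lemma kapp_mono_on (q : G → G → ℝ≥0∞) {ψ₁ ψ₂ : G → ℝ≥0∞} (x : G)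
    (hq : ∀ y, q x y ≠ 0 → ψ₁ y ≤ ψ₂ y) : kapp q ψ₁ x ≤ kapp q ψ₂ x := by
  refine ENNReal.tsum_le_tsum fun y => ?_
  by_cases h : q x y = 0
  · simp [h]
  · exact mul_le_mul_right (hq y h) _

lemma kapp_congr_on (q : G → G → ℝ≥0∞) {ψ₁ ψ₂ : G → ℝ≥0∞} (x : G)
    (hq : ∀ y, q x y ≠ 0 → ψ₁ y = ψ₂ y) : kapp q ψ₁ x = kapp q ψ₂ x := by
  refine tsum_congr fun y => ?_
  by_cases h : q x y = 0
  · simp [h]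
  · rw [hq y h]

lemma kapp_mono (q : G → G → ℝ≥0∞) {ψ₁ ψ₂ : G → ℝ≥0∞} (hle : ∀ y, ψ₁ y ≤ ψ₂ y) (x : G) :
    kapp q ψ₁ x ≤ kapp q ψ₂ x :=
  kapp_mono_on q x fun y _ => hle y

lemma papp_mono (q : G → G → ℝ≥0∞) (n : ℕ) {ψ₁ ψ₂ : G → ℝ≥0∞} (hle : ∀ y, ψ₁ y ≤ ψ₂ y) :
    ∀ z, papp q n ψ₁ z ≤ papp q n ψ₂ z := by
  induction n with
  | zero => exact hle
  | succ n ih => exact fun z => kapp_mono q ih z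

lemma kapp_add (q : G → G → ℝ≥0∞) (ψ₁ ψ₂ : G → ℝ≥0∞) (x : G) :
    kapp q (fun y => ψ₁ y + ψ₂ y) x = kapp q ψ₁ x + kapp q ψ₂ x := by
  unfold kapp
  rw [← ENNReal.tsum_add]
  exact tsum_congr fun y => mul_add _ _ _

lemma kapp_sum (q : G → G → ℝ≥0∞) {ι : Type*} (s : Finset ι) (g : ι → G → ℝ≥0∞) (x : G) :
    kapp q (fun y => ∑ i ∈ s, g i y) x = ∑ i ∈ s, kapp q (g i) x := by
  unfold kapp
  rw [← Summable.tsum_finsetSum (fun i _ => ENNReal.summable)]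
  exact tsum_congr fun y => Finset.mul_sum _ _ _

lemma surv_zero (q : G → G → ℝ≥0∞) (x : G) : surv q 0 x = 1 := by
  unfold surv
  simp only [kiter]
  rw [tsum_eq_single x]
  · simp
  · intro z hz
    simp [Ne.symm hz]

lemma surv_eq_papp (q : G → G → ℝ≥0∞) (n : ℕ) (x : G) :
    surv q n x = papp q n (fun _ => 1) x := by
  rw [papp_eq]
  simp [surv]

lemma surv_succ (q : G → G → ℝ≥0∞) (n : ℕ) (x : G) :
    surv q (n + 1) x = kapp q (surv q n) x := by
  rw [surv_eq_papp]
  show kapp q (papp q n fun _ => 1) x = kapp q (surv q n) x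
  exact kapp_congr_on q x fun y _ => (surv_eq_papp q n y).symm

end RW

namespace RW
variable {G : Type*} [Group G]

section Substoch
variable {p : G → G → ℝ≥0∞} (hsub : ∀ x, (∑' y, p x y) ≤ 1)
include hsub

lemma surv_le_one : ∀ n (x : G), surv p n x ≤ 1 := by
  intro n
  induction n with
  | zero => intro x; rw [surv_zero]
  | succ n ih =>
    intro x
    rw [surv_succ]
    calc kapp p (surv p n) x ≤ kapp p (fun _ => 1) x := kapp_mono p (fun y => ih y) x
      _ ≤ 1 := by simpa [kapp] using hsub x

lemma surv_succ_le : ∀ n (x : G), surv p (n + 1) x ≤ surv p n x := by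
  intro n
  induction n with
  | zero =>
    intro x
    rw [surv_zero]
    exact surv_le_one hsub 1 x
  | succ n ih =>
    intro x
    rw [surv_succ, surv_succ]
    exact kapp_mono p (fun y => ih y) x

lemma surv_antitone {m n : ℕ} (hmn : m ≤ n) (x : G) : surv p n x ≤ surv p m x := by
  have : Antitone fun k => surv p k x :=
    antitone_nat_of_succ_le fun k => surv_succ_le hsub k x
  exact this hmn

end Substoch

section Supp
variable {p : G → G → ℝ≥0∞} {E : Set G} (hsupp : ∀ x y, p x y ≠ 0 → x ∈ E ∧ y ∈ E)
include hsupp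

lemma kiter_mem : ∀ n (x z : G), x ∈ E → kiter p n x z ≠ 0 → z ∈ E := by
  intro n
  induction n with
  | zero =>
    intro x z hx h
    simp only [kiter] at h
    by_cases hxz : x = z
    · exact hxz ▸ hx
    · simp [hxz] at h
  | succ n ih =>
    intro x z hx h
    simp only [kiter] at h
    rw [Ne, ENNReal.tsum_eq_zero] at h
    push_neg at h
    obtain ⟨w, hw⟩ := h
    rw [mul_ne_zero_iff] at hw
    exact ih w z (hsupp x w hw.1).2 hw.2

lemma green_one_mem (hone : (1 : G) ∈ E) {z : G} (h : green p 1 z ≠ 0) : z ∈ E := by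
  unfold green at h
  rw [Ne, ENNReal.tsum_eq_zero] at h
  push_neg at h
  obtain ⟨n, hn⟩ := h
  exact kiter_mem hsupp n 1 z hone hn

end Supp

lemma kiter_one (p : G → G → ℝ≥0∞) (x y : G) : kiter p 1 x y = p x y := by
  simp only [kiter]
  rw [tsum_eq_single y]
  · simp
  · intro z hz
    simp [hz]

lemma fhit_le_kiter (p : G → G → ℝ≥0∞) : ∀ n (x y : G), fhit p n x y ≤ kiter p n x y
  | 0, x, y => by simp [fhit]
  | 1, x, y => by rw [kiter_one]; exact le_rfl
  | (n + 2), x, y => by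
    show (∑' z, if z = y then 0 else p x z * fhit p (n + 1) z y) ≤ _
    simp only [kiter]
    refine ENNReal.tsum_le_tsum fun z => ?_
    split
    · exact zero_le
    · exact mul_le_mul_right (fhit_le_kiter p (n + 1) z y) _

lemma kiter_mul_le (p : G → G → ℝ≥0∞) :
    ∀ (a b : ℕ) (x z y : G), kiter p a x z * kiter p b z y ≤ kiter p (a + b) x y := by
  intro a
  induction a with
  | zero =>
    intro b x z y
    simp only [kiter]
    by_cases hxz : x = z
    · subst hxz; simp
    · simp [hxz]
  | succ a ih =>
    intro b x z y
    have h1 : kiter p (a + 1) x z * kiter p b z y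
        = ∑' w, p x w * kiter p a w z * kiter p b z y := by
      simp only [kiter]
      rw [ENNReal.tsum_mul_right]
    rw [h1, show a + 1 + b = (a + b) + 1 by omega]
    simp only [kiter]
    refine ENNReal.tsum_le_tsum fun w => ?_
    rw [mul_assoc]
    exact mul_le_mul_right (ih b w z y) _

lemma surv_one_pos {p : G → G → ℝ≥0∞} {E : Set G}
    (hsupp : ∀ x y, p x y ≠ 0 → x ∈ E ∧ y ∈ E)
    (hsub : ∀ x, (∑' y, p x y) ≤ 1)
    (hirr : ∀ x ∈ E, ∀ y ∈ E, 0 < hitProb p x y)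
    (hone : (1 : G) ∈ E) (n : ℕ) : surv p n 1 ≠ 0 := by
  have h0 : hitProb p 1 1 ≠ 0 := (hirr 1 hone 1 hone).ne'
  obtain ⟨m, hm⟩ : ∃ m, fhit p m 1 1 ≠ 0 := by
    by_contra hc
    push_neg at hc
    exact h0 (by simpa [hitProb] using ENNReal.tsum_eq_zero.2 hc)
  have hm1 : 1 ≤ m := by
    rcases Nat.eq_zero_or_pos m with h | h
    · exact absurd (by simp [h, fhit]) hm
    · exact h
  have hc : kiter p m 1 1 ≠ 0 := fun h =>
    hm (le_antisymm (h ▸ fhit_le_kiter p m 1 1) (zero_le))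
  have hpow : ∀ j, (kiter p m 1 1) ^ j ≤ kiter p (j * m) 1 1 := by
    intro j
    induction j with
    | zero => simp [kiter]
    | succ j ih =>
      calc kiter p m 1 1 ^ (j + 1) = kiter p m 1 1 ^ j * kiter p m 1 1 := pow_succ _ _
        _ ≤ kiter p (j * m) 1 1 * kiter p m 1 1 := mul_le_mul_left ih _
        _ ≤ kiter p (j * m + m) 1 1 := kiter_mul_le p (j * m) m 1 1 1
        _ = kiter p ((j + 1) * m) 1 1 := by rw [Nat.succ_mul]
  have h1 : kiter p (n * m) 1 1 ≤ surv p (n * m) 1 := ENNReal.le_tsum 1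
  have h2 : surv p (n * m) 1 ≤ surv p n 1 :=
    surv_antitone hsub (by calc n = n * 1 := (mul_one n).symm
      _ ≤ n * m := Nat.mul_le_mul_left n hm1) 1
  intro hz
  have : (kiter p m 1 1) ^ n = 0 :=
    le_antisymm (by calc (kiter p m 1 1) ^ n ≤ kiter p (n * m) 1 1 := hpow n
      _ ≤ surv p (n * m) 1 := h1
      _ ≤ surv p n 1 := h2
      _ = 0 := hz) (zero_le)
  exact pow_ne_zero n hc this

lemma surv_ne_top {p : G → G → ℝ≥0∞} (hsub : ∀ x, (∑' y, p x y) ≤ 1) (n : ℕ) (x : G) :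
    surv p n x ≠ ⊤ :=
  ne_top_of_le_ne_top ENNReal.one_ne_top (surv_le_one hsub n x)

end RW

namespace RW
variable {G : Type*} [Group G]
set_option linter.unusedSectionVars false

section Comm
variable {p : G → G → ℝ≥0∞} {E : Set G}
  (hsupp : ∀ x y, p x y ≠ 0 → x ∈ E ∧ y ∈ E)
  (hmono : ∀ x ∈ E, ∀ y ∈ E, ∀ u ∈ E, p x y ≤ p (x * u) (y * u))

lemma acoef_le (u z y : G) : acoef p E u z y ≤ p (z * u) y := by
  unfold acoef
  split
  · exact tsub_le_self
  · exact le_rfl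

include hsupp hmono in
lemma acoef_add {u : G} (hu : u ∈ E) {z : G} (hz : z ∈ E) (y : G) :
    p z (y * u⁻¹) + acoef p E u z y = p (z * u) y := by
  unfold acoef
  split
  · rename_i h
    have hle : p z (y * u⁻¹) ≤ p (z * u) y := by
      have := hmono z hz (y * u⁻¹) h u hu
      rwa [inv_mul_cancel_right] at this
    exact add_tsub_cancel_of_le hle
  · rename_i h
    have h0 : p z (y * u⁻¹) = 0 := by
      by_contra hc
      exact h (hsupp z _ hc).2
    rw [h0, zero_add]

include hsupp hmono in
lemma commutator {x : G} (hx : x ∈ E) (ψ : G → ℝ≥0∞) {z : G} (hz : z ∈ E) :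
    kapp p (fun y => ψ (y * x)) z + Aop p E x ψ z = kapp p ψ (z * x) := by
  unfold kapp Aop
  have h1 : ∑' y, p z y * ψ (y * x) = ∑' y, p z (y * x⁻¹) * ψ y := by
    rw [← (Equiv.mulRight x).tsum_eq (fun y => p z (y * x⁻¹) * ψ y)]
    refine tsum_congr fun y => ?_
    simp [Equiv.mulRight, mul_inv_cancel_right]
  rw [h1, ← ENNReal.tsum_add]
  refine tsum_congr fun y => ?_
  rw [← add_mul, acoef_add hsupp hmono hx hz y]

include hsupp hmono in
lemma key_id {x : G} (hx : x ∈ E) :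
    ∀ n, ∀ z ∈ E, surv p n (z * x) = surv p n z +
      ∑ k ∈ Finset.range n, papp p k (Aop p E x (surv p (n - 1 - k))) z := by
  intro n
  induction n with
  | zero =>
    intro z hz
    rw [surv_zero, surv_zero]
    simp
  | succ n ih =>
    intro z hz
    have hC := commutator hsupp hmono hx (surv p n) hz
    rw [surv_succ, ← hC]
    have h2 : kapp p (fun y => surv p n (y * x)) z
        = kapp p (surv p n) z
          + ∑ k ∈ Finset.range n, kapp p (papp p k (Aop p E x (surv p (n - 1 - k)))) z := by
      have hcg := kapp_congr_on p (ψ₁ := fun y => surv p n (y * x))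
        (ψ₂ := fun y => surv p n y
          + ∑ k ∈ Finset.range n, papp p k (Aop p E x (surv p (n - 1 - k))) y) z
        (fun y hy => ih y (hsupp z y hy).2)
      rw [hcg, kapp_add, kapp_sum]
    rw [h2, ← surv_succ]
    rw [add_assoc]
    congr 1
    rw [Finset.sum_range_succ']
    simp only [Nat.add_sub_cancel]
    have hsnd : RW.Aop p E x (RW.surv p n) z = papp p 0 (Aop p E x (surv p (n - 0))) z := by
      rw [Nat.sub_zero]; rfl
    rw [hsnd]
    congr 1
    refine Finset.sum_congr rfl fun k _ => ?_
    rw [show n - (k + 1) = n - 1 - k by omega]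
    rfl

end Comm
end RW

namespace RW
variable {G : Type*} [Group G]
set_option linter.unusedSectionVars false

lemma Aop_mono {p : G → G → ℝ≥0∞} {E : Set G} (x : G) {ψ₁ ψ₂ : G → ℝ≥0∞}
    (hle : ∀ y, ψ₁ y ≤ ψ₂ y) (z : G) : Aop p E x ψ₁ z ≤ Aop p E x ψ₂ z :=
  ENNReal.tsum_le_tsum fun y => mul_le_mul_right (hle y) _

/-- The kernel of `P^k A_x` evaluated at the identity. -/
noncomputable def Qk (p : G → G → ℝ≥0∞) (E : Set G) (x : G) (k : ℕ) (y : G) : ℝ≥0∞ :=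
  ∑' z, kiter p k 1 z * acoef p E x z y

lemma papp_Aop (p : G → G → ℝ≥0∞) (E : Set G) (x : G) (k : ℕ) (ψ : G → ℝ≥0∞) :
    papp p k (Aop p E x ψ) 1 = ∑' y, Qk p E x k y * ψ y := by
  rw [papp_eq]
  unfold Aop Qk
  calc ∑' z, kiter p k 1 z * ∑' y, acoef p E x z y * ψ y
      = ∑' z, ∑' y, kiter p k 1 z * (acoef p E x z y * ψ y) :=
        tsum_congr fun z => ENNReal.tsum_mul_left.symm
    _ = ∑' y, ∑' z, kiter p k 1 z * (acoef p E x z y * ψ y) := ENNReal.tsum_comm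
    _ = ∑' y, (∑' z, kiter p k 1 z * acoef p E x z y) * ψ y := by
        refine tsum_congr fun y => ?_
        rw [← ENNReal.tsum_mul_right]
        exact tsum_congr fun z => (mul_assoc _ _ _).symm

lemma tsum_Qk (p : G → G → ℝ≥0∞) (E : Set G) (x y : G) :
    ∑' k, Qk p E x k y = ladder p E x y := by
  unfold Qk ladder green
  rw [ENNReal.tsum_comm]
  exact tsum_congr fun z => ENNReal.tsum_mul_right

lemma Qk_supp {p : G → G → ℝ≥0∞} {E : Set G}
    (hsupp : ∀ x y, p x y ≠ 0 → x ∈ E ∧ y ∈ E) (hone : (1 : G) ∈ E)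
    {x : G} (k : ℕ) {y : G} (h : Qk p E x k y ≠ 0) : y ∈ E := by
  unfold Qk at h
  rw [Ne, ENNReal.tsum_eq_zero] at h
  push_neg at h
  obtain ⟨z, hz⟩ := h
  rw [mul_ne_zero_iff] at hz
  have hzE : z ∈ E := kiter_mem hsupp k 1 z hone hz.1
  have hpy : p (z * x) y ≠ 0 := fun h0 =>
    hz.2 (le_antisymm (h0 ▸ acoef_le x z y) (zero_le))
  exact (hsupp _ _ hpy).2

lemma ladder_supp {p : G → G → ℝ≥0∞} {E : Set G}
    (hsupp : ∀ x y, p x y ≠ 0 → x ∈ E ∧ y ∈ E) (hone : (1 : G) ∈ E)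
    {x y : G} (h : ladder p E x y ≠ 0) : y ∈ E := by
  unfold ladder at h
  rw [Ne, ENNReal.tsum_eq_zero] at h
  push_neg at h
  obtain ⟨z, hz⟩ := h
  rw [mul_ne_zero_iff] at hz
  have hpy : p (z * x) y ≠ 0 := fun h0 =>
    hz.2 (le_antisymm (h0 ▸ acoef_le x z y) (zero_le))
  exact (hsupp _ _ hpy).2

section Key
variable {p : G → G → ℝ≥0∞} {E : Set G}
  (hsupp : ∀ x y, p x y ≠ 0 → x ∈ E ∧ y ∈ E)
  (hsub : ∀ x, (∑' y, p x y) ≤ 1)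
  (hmono : ∀ x ∈ E, ∀ y ∈ E, ∀ u ∈ E, p x y ≤ p (x * u) (y * u))
  (hone : (1 : G) ∈ E)
include hsupp hsub hmono hone

lemma key_ineq {x : G} (hx : x ∈ E) {N n : ℕ} (hNn : N ≤ n) :
    surv p n 1 + ∑ k ∈ Finset.range N, papp p k (Aop p E x (surv p n)) 1 ≤ surv p n x := by
  have hid := key_id hsupp hmono hx n 1 hone
  rw [one_mul] at hid
  rw [hid]
  refine add_le_add_right ?_ _
  calc ∑ k ∈ Finset.range N, papp p k (Aop p E x (surv p n)) 1
      ≤ ∑ k ∈ Finset.range N, papp p k (Aop p E x (surv p (n - 1 - k))) 1 :=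
        Finset.sum_le_sum fun k _ => papp_mono p k
          (fun z => Aop_mono x (fun y => surv_antitone hsub (by omega) y) z) 1
    _ ≤ ∑ k ∈ Finset.range n, papp p k (Aop p E x (surv p (n - 1 - k))) 1 :=
        Finset.sum_le_sum_of_subset (Finset.range_subset_range.2 hNn)

lemma key_div {x : G} (hx : x ∈ E)
    (hirr : ∀ x ∈ E, ∀ y ∈ E, 0 < hitProb p x y) {N n : ℕ} (hNn : N ≤ n) :
    1 + ∑ k ∈ Finset.range N, ∑' y, Qk p E x k y * (surv p n y / surv p n 1)
      ≤ surv p n x / surv p n 1 := by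
  have hc0 : surv p n 1 ≠ 0 := surv_one_pos hsupp hsub hirr hone n
  have hct : surv p n 1 ≠ ⊤ := surv_ne_top hsub n 1
  have h := key_ineq hsupp hsub hmono hone hx hNn
  have h2 := mul_le_mul_left h (surv p n 1)⁻¹
  rw [add_mul, Finset.sum_mul, ENNReal.mul_inv_cancel hc0 hct] at h2
  simp only [div_eq_mul_inv]
  refine le_trans (le_of_eq ?_) h2
  congr 1
  refine Finset.sum_congr rfl fun k _ => ?_
  rw [papp_Aop, ENNReal.tsum_mul_right.symm]
  exact tsum_congr fun y => (mul_assoc _ _ _).symm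

end Key
end RW

open MeasureTheory in
lemma tsum_fatou {β : Type*} [Countable β] (q : β → ℝ≥0∞) (u : ℕ → β → ℝ≥0∞) :
    ∑' b, q b * Filter.liminf (fun j => u j b) atTop
      ≤ Filter.liminf (fun j => ∑' b, q b * u j b) atTop := by
  letI : MeasurableSpace β := ⊤
  set μ : Measure β := Measure.sum (fun b => q b • Measure.dirac b) with hμ
  have hmeas : ∀ ψ : β → ℝ≥0∞, Measurable ψ := fun ψ _ _ => MeasurableSpace.measurableSet_top
  have hint : ∀ ψ : β → ℝ≥0∞, ∫⁻ a, ψ a ∂μ = ∑' b, q b * ψ b := by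
    intro ψ
    rw [hμ, lintegral_sum_measure]
    refine tsum_congr fun b => ?_
    rw [lintegral_smul_measure, lintegral_dirac' b (hmeas ψ), smul_eq_mul]
  calc ∑' b, q b * Filter.liminf (fun j => u j b) atTop
      = ∫⁻ a, Filter.liminf (fun j => u j a) atTop ∂μ := (hint _).symm
    _ ≤ Filter.liminf (fun j => ∫⁻ a, u j a ∂μ) atTop := lintegral_liminf_le (fun _ => hmeas _)
    _ = _ := by simp only [hint]

lemma add_liminf_le (a : ℝ≥0∞) (w : ℕ → ℝ≥0∞) :
    a + Filter.liminf w atTop ≤ Filter.liminf (fun j => a + w j) atTop := by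
  rw [Filter.liminf_eq, Filter.liminf_eq]
  have hne : {c | ∀ᶠ n in atTop, c ≤ w n}.Nonempty :=
    ⟨0, Filter.Eventually.of_forall fun _ => zero_le⟩
  rw [ENNReal.add_sSup hne]
  refine iSup₂_le fun c hc => le_sSup ?_
  exact hc.mono fun n hn => add_le_add_right hn a

lemma tsum_finprod {G : Type*} (N : ℕ) (F : ℕ → G → ℝ≥0∞) :
    ∑' b : Fin N × G, F b.1 b.2 = ∑ k ∈ Finset.range N, ∑' y, F k y := by
  rw [ENNReal.tsum_prod (f := fun (k : Fin N) (y : G) => F k y), tsum_fintype]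
  exact Fin.sum_univ_eq_sum_range (fun k => ∑' y, F k y) N


namespace RW
variable {G : Type*} [Group G] [Countable G]
set_option linter.unusedSectionVars false

section Lim
variable {p : G → G → ℝ≥0∞} {E : Set G}
  (hsupp : ∀ x y, p x y ≠ 0 → x ∈ E ∧ y ∈ E)
  (hsub : ∀ x, (∑' y, p x y) ≤ 1)
  (hmono : ∀ x ∈ E, ∀ y ∈ E, ∀ u ∈ E, p x y ≤ p (x * u) (y * u))
  (hone : (1 : G) ∈ E)
  (hirr : ∀ x ∈ E, ∀ y ∈ E, 0 < hitProb p x y)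

include hsupp hsub hirr hone in
lemma superharmonic_lim (h : G → ℝ≥0∞) (ι : ℕ → ℕ)
    (hh : ∀ y ∈ E, h y ≤ liminf (fun j => surv p (ι j) y / surv p (ι j) 1) atTop)
    {x : G} (hx : x ∈ E)
    (hx' : liminf (fun j => surv p (ι j) x / surv p (ι j) 1) atTop ≤ h x) :
    kapp p h x ≤ h x := by
  calc kapp p h x
      ≤ ∑' y, p x y * liminf (fun j => surv p (ι j) y / surv p (ι j) 1) atTop := by
        refine ENNReal.tsum_le_tsum fun y => ?_
        by_cases hp : p x y = 0
        · simp [hp]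
        · exact mul_le_mul_right (hh y (hsupp x y hp).2) _
    _ ≤ liminf (fun j => ∑' y, p x y * (surv p (ι j) y / surv p (ι j) 1)) atTop :=
        tsum_fatou _ _
    _ ≤ liminf (fun j => surv p (ι j) x / surv p (ι j) 1) atTop := by
        refine Filter.liminf_le_liminf (Filter.Eventually.of_forall fun j => ?_)
        have h1 : ∑' y, p x y * (surv p (ι j) y / surv p (ι j) 1)
            = surv p (ι j + 1) x * (surv p (ι j) 1)⁻¹ := by
          rw [surv_succ]
          unfold kapp
          rw [← ENNReal.tsum_mul_right]
          exact tsum_congr fun y => by rw [div_eq_mul_inv, mul_assoc]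
        rw [h1, div_eq_mul_inv]
        exact mul_le_mul_left (surv_succ_le hsub (ι j) x) _
    _ ≤ h x := hx'

include hsupp hsub hmono hone hirr in
lemma ladder_bound (h : G → ℝ≥0∞) (ι : ℕ → ℕ)
    (hι : ∀ N : ℕ, ∀ᶠ j in atTop, N ≤ ι j)
    (hh : ∀ y ∈ E, h y ≤ liminf (fun j => surv p (ι j) y / surv p (ι j) 1) atTop)
    {x : G} (hx : x ∈ E)
    (hx' : liminf (fun j => surv p (ι j) x / surv p (ι j) 1) atTop ≤ h x) :
    1 + kapp (ladder p E) h x ≤ h x := by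
  have hstep : ∀ N : ℕ, 1 + ∑ k ∈ Finset.range N, ∑' y, Qk p E x k y * h y ≤ h x := by
    intro N
    set u : ℕ → (Fin N × G) → ℝ≥0∞ :=
      fun j b => surv p (ι j) b.2 / surv p (ι j) 1 with hu
    set q : (Fin N × G) → ℝ≥0∞ := fun b => Qk p E x b.1 b.2 with hq
    have hWj : ∀ᶠ j in atTop, 1 + ∑' b, q b * u j b ≤ surv p (ι j) x / surv p (ι j) 1 := by
      filter_upwards [hι N] with j hj
      have hk := key_div hsupp hsub hmono hone hx hirr hj
      have hpr : ∑' b, q b * u j b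
          = ∑ k ∈ Finset.range N, ∑' y, Qk p E x k y * (surv p (ι j) y / surv p (ι j) 1) :=
        tsum_finprod N (fun k y => Qk p E x k y * (surv p (ι j) y / surv p (ι j) 1))
      rw [hpr]
      exact hk
    calc 1 + ∑ k ∈ Finset.range N, ∑' y, Qk p E x k y * h y
        = 1 + ∑' b : Fin N × G, q b * h b.2 := by
          rw [tsum_finprod N (fun k y => Qk p E x k y * h y)]
      _ ≤ 1 + ∑' b : Fin N × G, q b * liminf (fun j => u j b) atTop := by
          refine add_le_add_right (ENNReal.tsum_le_tsum fun b => ?_) _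
          by_cases h0 : q b = 0
          · simp [h0]
          · exact mul_le_mul_right (hh b.2 (Qk_supp hsupp hone b.1 h0)) _
      _ ≤ 1 + liminf (fun j => ∑' b, q b * u j b) atTop :=
          add_le_add_right (tsum_fatou q u) _
      _ ≤ liminf (fun j => 1 + ∑' b, q b * u j b) atTop := add_liminf_le 1 _
      _ ≤ liminf (fun j => surv p (ι j) x / surv p (ι j) 1) atTop :=
          Filter.liminf_le_liminf hWj
      _ ≤ h x := hx'
  have hsup : 1 + ⨆ N : ℕ, ∑ k ∈ Finset.range N, (∑' y, Qk p E x k y * h y) ≤ h x := by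
    rw [ENNReal.add_iSup]
    exact iSup_le hstep
  rw [← ENNReal.tsum_eq_iSup_nat] at hsup
  refine le_trans (le_of_eq ?_) hsup
  congr 1
  calc kapp (ladder p E) h x
      = ∑' y, (∑' k, Qk p E x k y) * h y := by
        unfold kapp
        exact tsum_congr fun y => by rw [tsum_Qk]
    _ = ∑' y, ∑' k, Qk p E x k y * h y :=
        tsum_congr fun y => ENNReal.tsum_mul_right.symm
    _ = ∑' k, ∑' y, Qk p E x k y * h y := ENNReal.tsum_comm

end Lim
end RW

namespace RW
variable {G : Type*} [Group G]
set_option linter.unusedSectionVars false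

lemma hit_bound {p : G → G → ℝ≥0∞} {E : Set G}
    (hsupp : ∀ x y, p x y ≠ 0 → x ∈ E ∧ y ∈ E) (hone : (1 : G) ∈ E)
    (h : G → ℝ≥0∞) (hsh : ∀ w ∈ E, kapp p h w ≤ h w) {x : G} (hx : x ∈ E) :
    hitProb p 1 x * h x ≤ h 1 := by
  have claim : ∀ n, ∀ w ∈ E, (∑ m ∈ Finset.range n, fhit p m w x) * h x ≤ h w := by
    intro n
    induction n with
    | zero => intro w hw; simp
    | succ n ih =>
      intro w hw
      rcases n with _ | m
      · rw [show ∑ m ∈ Finset.range 1, fhit p m w x = 0 by simp [fhit]]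
        simp
      · have hrw : ∑ j ∈ Finset.range (m + 2), fhit p j w x
            = p w x + ∑' z, if z = x then 0
                else p w z * ∑ j ∈ Finset.range (m + 1), fhit p j z x := by
          rw [Finset.sum_range_succ']
          rw [show fhit p 0 w x = 0 from rfl, add_zero]
          rw [Finset.sum_range_succ']
          rw [show fhit p (0 + 1) w x = p w x from rfl, add_comm]
          congr 1
          calc ∑ j ∈ Finset.range m, fhit p (j + 1 + 1) w x
              = ∑ j ∈ Finset.range m,
                  ∑' z, if z = x then 0 else p w z * fhit p (j + 1) z x :=
                Finset.sum_congr rfl fun j _ => rfl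
            _ = ∑' z, ∑ j ∈ Finset.range m,
                  if z = x then 0 else p w z * fhit p (j + 1) z x :=
                (Summable.tsum_finsetSum fun _ _ => ENNReal.summable).symm
            _ = ∑' z, if z = x then 0
                  else p w z * ∑ j ∈ Finset.range (m + 1), fhit p j z x := by
                refine tsum_congr fun z => ?_
                by_cases hz : z = x
                · simp [hz]
                · simp only [hz, if_false]
                  rw [Finset.sum_range_succ']
                  rw [show fhit p 0 z x = 0 from rfl, add_zero, Finset.mul_sum]
        rw [hrw, add_mul, ← ENNReal.tsum_mul_right]
        have hbd : ∑' z, (if z = x then 0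
              else p w z * ∑ j ∈ Finset.range (m + 1), fhit p j z x) * h x
            ≤ ∑' z, if z = x then 0 else p w z * h z := by
          refine ENNReal.tsum_le_tsum fun z => ?_
          by_cases hz : z = x
          · simp [hz]
          · simp only [hz, if_false]
            by_cases hp : p w z = 0
            · simp [hp]
            · rw [mul_assoc]
              exact mul_le_mul_right (ih z (hsupp w z hp).2) _
        refine le_trans (add_le_add_right hbd _) ?_
        have hsplit : p w x * h x + (∑' z, if z = x then 0 else p w z * h z)
            = ∑' z, p w z * h z :=
          (ENNReal.tsum_eq_add_tsum_ite (f := fun z => p w z * h z) x).symm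
        rw [hsplit]
        exact hsh w hw
  have h1 : hitProb p 1 x = ⨆ n : ℕ, ∑ m ∈ Finset.range n, fhit p m 1 x :=
    ENNReal.tsum_eq_iSup_nat
  rw [h1, ENNReal.iSup_mul]
  exact iSup_le fun n => claim n 1 hone

end RW



open RW

theorem statement11 {G : Type*} [Group G] [Countable G]
    (p : G → G → ℝ≥0∞) (E : Set G)
    (hsupp : ∀ x y, p x y ≠ 0 → x ∈ E ∧ y ∈ E)
    (hsub : ∀ x, (∑' y, p x y) ≤ 1)
    (hirr : ∀ x ∈ E, ∀ y ∈ E, 0 < hitProb p x y)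
    (htrans : ∀ x ∈ E, green p x x < ⊤)
    (hone : (1 : G) ∈ E)
    (hmul : ∀ x ∈ E, ∀ y ∈ E, x * y ∈ E)
    (hmono : ∀ x ∈ E, ∀ y ∈ E, ∀ u ∈ E, p x y ≤ p (x * u) (y * u))
    (f : G → ℝ≥0∞) (φ : ℕ → ℕ) (hφ : StrictMono φ)
    (hlim : ∀ x ∈ E,
      Tendsto (fun k => surv p (φ k) x / surv p (φ k) 1) atTop (nhds (f x))) :
    (∀ x ∈ E, kapp p f x ≤ f x) ∧
    (∀ x ∈ E, kapp (ladder p E) f x + 1 ≤ f x) ∧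
    (∀ x ∈ E, V p E x < ⊤) ∧
    (∀ x ∈ E, V p E x ≤ Filter.liminf (fun n => surv p n x / surv p n 1) atTop) := by
  have hφev : ∀ N : ℕ, ∀ᶠ j in atTop, N ≤ φ j := by
    intro N
    filter_upwards [Filter.eventually_ge_atTop N] with j hj
    exact hj.trans hφ.le_apply
  have hhf : ∀ y ∈ E, f y ≤ liminf (fun j => surv p (φ j) y / surv p (φ j) 1) atTop :=
    fun y hy => le_of_eq ((hlim y hy).liminf_eq).symm
  have hxf : ∀ x ∈ E, liminf (fun j => surv p (φ j) x / surv p (φ j) 1) atTop ≤ f x :=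
    fun x hx => le_of_eq ((hlim x hx).liminf_eq)
  have part1 : ∀ x ∈ E, kapp p f x ≤ f x := fun x hx =>
    superharmonic_lim hsupp hsub hone hirr f φ hhf hx (hxf x hx)
  have part2 : ∀ x ∈ E, kapp (ladder p E) f x + 1 ≤ f x := by
    intro x hx
    have := ladder_bound hsupp hsub hmono hone hirr f φ hφev hhf hx (hxf x hx)
    rwa [add_comm] at this
  -- the liminf function
  set g : G → ℝ≥0∞ := fun y => Filter.liminf (fun n => surv p n y / surv p n 1) atTop with hg
  have hhg : ∀ y ∈ E, g y ≤ liminf (fun j => surv p ((fun n => n) j) y / surv p ((fun n => n) j) 1) atTop :=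
    fun y _ => le_rfl
  have hgev : ∀ N : ℕ, ∀ᶠ j in atTop, N ≤ (fun n => n) j := fun N =>
    Filter.eventually_ge_atTop N
  have hgsh : ∀ w ∈ E, kapp p g w ≤ g w := fun w hw =>
    superharmonic_lim hsupp hsub hone hirr g (fun n => n) hhg hw le_rfl
  have hglad : ∀ x ∈ E, 1 + kapp (ladder p E) g x ≤ g x := fun x hx =>
    ladder_bound hsupp hsub hmono hone hirr g (fun n => n) hgev hhg hx le_rfl
  have hg1 : g (1 : G) = 1 := by
    have hcst : (fun n => surv p n (1 : G) / surv p n 1) = fun _ => (1 : ℝ≥0∞) :=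
      funext fun n => ENNReal.div_self (surv_one_pos hsupp hsub hirr hone n)
        (surv_ne_top hsub n 1)
    calc g (1 : G) = Filter.liminf (fun n => surv p n (1 : G) / surv p n 1) atTop := rfl
      _ = 1 := by rw [hcst]; exact Filter.liminf_const 1
  have hgfin : ∀ x ∈ E, g x ≠ ⊤ := by
    intro x hx ht
    have hb := hit_bound hsupp hone g hgsh hx
    rw [ht, ENNReal.mul_top (hirr 1 hone x hx).ne', hg1] at hb
    exact absurd hb (by simp)
  set L : G → G → ℝ≥0∞ := ladder p E with hL
  have claimV : ∀ n, ∀ x ∈ E,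
      (∑ m ∈ Finset.range n, surv L m x) + papp L n g x ≤ g x := by
    intro n
    induction n with
    | zero => intro x hx; simp [papp]
    | succ n ih =>
      intro x hx
      have hmono' : kapp L (fun y => (∑ m ∈ Finset.range n, surv L m y) + papp L n g y) x
          ≤ kapp L g x :=
        kapp_mono_on L x (fun y hy => ih y (ladder_supp hsupp hone hy))
      have heq : kapp L (fun y => (∑ m ∈ Finset.range n, surv L m y) + papp L n g y) x
          = (∑ m ∈ Finset.range n, surv L (m + 1) x) + papp L (n + 1) g x := by
        rw [kapp_add, kapp_sum]
        congr 1
        exact Finset.sum_congr rfl fun m _ => (surv_succ L m x).symm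
      calc (∑ m ∈ Finset.range (n + 1), surv L m x) + papp L (n + 1) g x
          = ((∑ m ∈ Finset.range n, surv L (m + 1) x) + surv L 0 x)
              + papp L (n + 1) g x := by rw [Finset.sum_range_succ']
        _ = 1 + ((∑ m ∈ Finset.range n, surv L (m + 1) x) + papp L (n + 1) g x) := by
            rw [surv_zero]; ring
        _ ≤ 1 + kapp L g x := add_le_add_right (heq ▸ hmono') _
        _ ≤ g x := hglad x hx
  have hVle : ∀ x ∈ E, V p E x ≤ g x := by
    intro x hx
    have : V p E x = ⨆ n : ℕ, ∑ m ∈ Finset.range n, surv L m x := by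
      rw [V, ENNReal.tsum_eq_iSup_nat]
    rw [this]
    refine iSup_le fun n => ?_
    exact le_trans (self_le_add_right _ _) (claimV n x hx)
  refine ⟨part1, part2, fun x hx => ?_, fun x hx => hVle x hx⟩
  exact lt_of_le_of_lt (hVle x hx) (lt_top_iff_ne_top.2 (hgfin x hx))
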